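/- Let (E, L, E) be a labeled space in which every loop has an exit. Then (E, L, E) satisfies Condition (L), i.e., every cycle has an exit. -/

import Mathlib

universe u v

variable {V : Type u} {Λ : Type v}

/-- The relative range `r(S, α)` of a set of vertices along a labeled path. -/
def relRange (Edge : V → Λ → V → Prop) : Set V → List Λ → Set V
  | S, [] => S
  | S, a :: α => relRange Edge {w | ∃ u ∈ S, Edge u a w} α

/-- The range `r(α)` of a labeled path. -/
def lrange (Edge : V → Λ → V → Prop) (α : List Λ) : Set V :=
  relRange Edge Set.univ α

/-- `α` is a (nonempty) labeled path of the labeled graph. -/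
def IsLP (Edge : V → Λ → V → Prop) (α : List Λ) : Prop :=
  α ≠ [] ∧ (lrange Edge α).Nonempty

/-- `L(SE¹)`: labels of edges emitted from `S`. -/
def edgeLabels (Edge : V → Λ → V → Prop) (S : Set V) : Set Λ :=
  {a | ∃ u ∈ S, ∃ w, Edge u a w}

/-- `S` is regular: every nonempty `B ∈ ℬ` with `B ⊆ S` emits a finite nonzero set of labels. -/
def RegularSet (Edge : V → Λ → V → Prop) (ℬ : Set (Set V)) (S : Set V) : Prop :=
  ∀ B ∈ ℬ, B ⊆ S → B.Nonempty →
    (edgeLabels Edge B).Finite ∧ (edgeLabels Edge B).Nonempty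

/-- `H ⊆ ℬ` is hereditary. -/
def Hered (Edge : V → Λ → V → Prop) (ℬ H : Set (Set V)) : Prop :=
  H ⊆ ℬ ∧ (∀ A ∈ H, ∀ α : List Λ, IsLP Edge α → relRange Edge A α ∈ H) ∧
    (∀ A ∈ H, ∀ B ∈ H, A ∪ B ∈ H) ∧ (∀ A ∈ H, ∀ B ∈ ℬ, B ⊆ A → B ∈ H)

/-- `H` is saturated. -/
def Satur (Edge : V → Λ → V → Prop) (ℬ H : Set (Set V)) : Prop :=
  ∀ A ∈ ℬ, RegularSet Edge ℬ A →
    (∀ α : List Λ, IsLP Edge α → relRange Edge A α ∈ H) → A ∈ H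

/-- `H(A)`: sets covered by finitely many relative ranges `r(A, αᵢ)`, `αᵢ ∈ L^#(E)`. -/
def HSet (Edge : V → Λ → V → Prop) (ℬ : Set (Set V)) (A : Set V) : Set (Set V) :=
  {B ∈ ℬ | ∃ l : List (List Λ), (∀ α ∈ l, α = [] ∨ IsLP Edge α) ∧
    B ⊆ ⋃ α ∈ l, relRange Edge A α}

/-- `S(H(A))`: the saturation of `H(A)`. -/
def SHSet (Edge : V → Λ → V → Prop) (ℬ : Set (Set V)) (A : Set V) : Set (Set V) :=
  {B ∈ ℬ | ∃ n : ℕ,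
    (∀ β : List Λ, (β = [] ∨ IsLP Edge β) → β.length = n →
      relRange Edge B β ∈ HSet Edge ℬ A) ∧
    (∀ γ : List Λ, (γ = [] ∨ IsLP Edge γ) → γ.length < n →
      ∃ C ∈ HSet Edge ℬ A, ∃ D ∈ ℬ, RegularSet Edge ℬ D ∧ relRange Edge B γ = C ∪ D)}

/-- `ℬ` is an accommodating set for the labeled graph. -/
def Accommodating (Edge : V → Λ → V → Prop) (ℬ : Set (Set V)) : Prop :=
  (∀ α : List Λ, IsLP Edge α → lrange Edge α ∈ ℬ) ∧
    (∀ A ∈ ℬ, ∀ α : List Λ, IsLP Edge α → relRange Edge A α ∈ ℬ) ∧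
    (∀ A ∈ ℬ, ∀ B ∈ ℬ, A ∪ B ∈ ℬ) ∧ (∀ A ∈ ℬ, ∀ B ∈ ℬ, A ∩ B ∈ ℬ)

/-- `ℬ` is non-degenerate: closed under relative complements (and contains `∅`). -/
def NonDegenerate (ℬ : Set (Set V)) : Prop :=
  (∅ : Set V) ∈ ℬ ∧ ∀ A ∈ ℬ, ∀ B ∈ ℬ, A \ B ∈ ℬ

/-- The labeled space is weakly left-resolving. -/
def WLR (Edge : V → Λ → V → Prop) (ℬ : Set (Set V)) : Prop :=
  ∀ A ∈ ℬ, ∀ B ∈ ℬ, ∀ α : List Λ, IsLP Edge α →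
    relRange Edge (A ∩ B) α = relRange Edge A α ∩ relRange Edge B α

/-- `ℬ` is the smallest non-degenerate accommodating set. -/
def SmallestAccom (Edge : V → Λ → V → Prop) (ℬ : Set (Set V)) : Prop :=
  Accommodating Edge ℬ ∧ NonDegenerate ℬ ∧
    ∀ ℬ' : Set (Set V), Accommodating Edge ℬ' → NonDegenerate ℬ' → ℬ ⊆ ℬ'

/-- `x_{[1,n]}`: the length-`n` prefix of an infinite word. -/
def wordPrefix (x : ℕ → Λ) (n : ℕ) : List Λ := List.ofFn fun i : Fin n => x i.val

/-- `x` lies in the closure of `L(E^∞)`: all finite prefixes are labeled paths. -/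
def InfWord (Edge : V → Λ → V → Prop) (x : ℕ → Λ) : Prop :=
  ∀ n : ℕ, 1 ≤ n → IsLP Edge (wordPrefix x n)

/-- Strong cofinality of a labeled space. -/
def StrCofinal (Edge : V → Λ → V → Prop) (ℬ : Set (Set V)) : Prop :=
  ∀ A ∈ ℬ, A.Nonempty → ∀ x : ℕ → Λ, InfWord Edge x →
    ∃ N : ℕ, 1 ≤ N ∧ ∃ l : List (List Λ), (∀ α ∈ l, IsLP Edge α) ∧
      lrange Edge (wordPrefix x N) ⊆ ⋃ α ∈ l, relRange Edge A α

/-- Minimality: the only hereditary saturated subsets of `ℬ` are `{∅}` and `ℬ`. -/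
def MinimalLS (Edge : V → Λ → V → Prop) (ℬ : Set (Set V)) : Prop :=
  ∀ H : Set (Set V), Hered Edge ℬ H → Satur Edge ℬ H → H ⊆ {∅} ∨ H = ℬ

/-- `L(SEⁿ)`: labels of paths of length `n` with source in `S`. -/
def labelsOfLen (Edge : V → Λ → V → Prop) (S : Set V) (n : ℕ) : Set (List Λ) :=
  {β | β.length = n ∧ (relRange Edge S β).Nonempty}

/-- The labeled space is disagreeable. -/
def Disagreeable (Edge : V → Λ → V → Prop) (ℬ : Set (Set V)) : Prop :=
  ∀ A ∈ ℬ, A.Nonempty → ∀ β : List Λ, IsLP Edge β →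
    ∃ n : ℕ, 1 ≤ n ∧ labelsOfLen Edge A (β.length * n) ≠ {(List.replicate n β).flatten}

/-- `(α, A)` is a cycle. -/
def IsCycle (Edge : V → Λ → V → Prop) (ℬ : Set (Set V)) (α : List Λ) (A : Set V) : Prop :=
  IsLP Edge α ∧ A ∈ ℬ ∧ A.Nonempty ∧ ∀ B ∈ ℬ, B ⊆ A → relRange Edge B α = B

/-- The cycle `(α, A)` has an exit. -/
def CycleHasExit (Edge : V → Λ → V → Prop) (ℬ : Set (Set V)) (α : List Λ) (A : Set V) : Prop :=
  ∃ t : ℕ, 1 ≤ t ∧ t ≤ α.length ∧ ∃ B ∈ ℬ, B.Nonempty ∧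
    B ⊆ relRange Edge A (α.take t) ∧
    edgeLabels Edge B ≠ {a : Λ | α[t % α.length]? = some a}

/-- The cycle `(α, A)` has no exits. -/
def CycleNoExit (Edge : V → Λ → V → Prop) (ℬ : Set (Set V)) (α : List Λ) (A : Set V) : Prop :=
  ∀ t : ℕ, 1 ≤ t → t ≤ α.length → ∀ B ∈ ℬ, B.Nonempty →
    B ⊆ relRange Edge A (α.take t) →
    RegularSet Edge ℬ B ∧ edgeLabels Edge B = {a : Λ | α[t % α.length]? = some a}

/-- Condition (L): every cycle has an exit. -/
def CondL (Edge : V → Λ → V → Prop) (ℬ : Set (Set V)) : Prop :=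
  ∀ (α : List Λ) (A : Set V), IsCycle Edge ℬ α A → CycleHasExit Edge ℬ α A

/-- `α` is a loop at `A`. -/
def IsLoop (Edge : V → Λ → V → Prop) (α : List Λ) (A : Set V) : Prop :=
  IsLP Edge α ∧ A ⊆ relRange Edge A α

/-- The loop `(α, A)` has an exit. -/
def LoopHasExit (Edge : V → Λ → V → Prop) (α : List Λ) (A : Set V) : Prop :=
  {β : List Λ | ∃ k : ℕ, 1 ≤ k ∧ k ≤ α.length ∧ β = α.take k} ⊂
      {β : List Λ | 1 ≤ β.length ∧ β.length ≤ α.length ∧ (relRange Edge A β).Nonempty} ∨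
    A ⊂ relRange Edge A α

/-- `β` is an irreducible path: not a repetition of a proper initial path. -/
def IrreduciblePath (β : List Λ) : Prop :=
  ∀ k : ℕ, 1 ≤ k → k < β.length → ∀ m : ℕ, β ≠ (List.replicate m (β.take k)).flatten

/-- The generalized vertex `[v]_l`. -/
def gvClass (Edge : V → Λ → V → Prop) (l : ℕ) (v : V) : Set V :=
  {w | ∀ β : List Λ, 1 ≤ β.length → β.length ≤ l → (v ∈ lrange Edge β ↔ w ∈ lrange Edge β)}

/-- `s(x)`: sources of infinite paths labeled by `x`. -/
def srcInf (Edge : V → Λ → V → Prop) (x : ℕ → Λ) : Set V :=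
  {w | ∃ p : ℕ → V, p 0 = w ∧ ∀ n : ℕ, Edge (p n) (x n) (p (n + 1))}


private lemma relRange_append' (Edge : V → Λ → V → Prop) (S : Set V) (γ δ : List Λ) :
    relRange Edge S (γ ++ δ) = relRange Edge (relRange Edge S γ) δ := by
  induction γ generalizing S with
  | nil => rfl
  | cons a γ ih => simpa [relRange] using ih _

private lemma relRange_empty' (Edge : V → Λ → V → Prop) (γ : List Λ) :
    relRange Edge (∅ : Set V) γ = ∅ := by
  induction γ with
  | nil => rfl
  | cons a γ ih =>
    have h : {w | ∃ u ∈ (∅ : Set V), Edge u a w} = (∅ : Set V) := by simp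
    rw [relRange, h]; exact ih

private lemma nonempty_of_relRange_append {Edge : V → Λ → V → Prop} {S : Set V} {γ δ : List Λ}
    (h : (relRange Edge S (γ ++ δ)).Nonempty) : (relRange Edge S γ).Nonempty := by
  by_contra hne
  rw [Set.not_nonempty_iff_eq_empty] at hne
  rw [relRange_append', hne, relRange_empty'] at h
  exact h.ne_empty rfl

/-- if every loop has an exit, then the labeled space satisfies
Condition (L). -/
theorem loops_have_exits_implies_condL (Edge : V → Λ → V → Prop) (ℰ : Set (Set V))
    (hsm : SmallestAccom Edge ℰ) (hwlr : WLR Edge ℰ)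
    (hex : ∀ A ∈ ℰ, A.Nonempty → ∀ α : List Λ, IsLoop Edge α A → LoopHasExit Edge α A) :
    CondL Edge ℰ := by
  intro α A hcyc
  obtain ⟨hlp, hAE, hAne, hfix⟩ := hcyc
  have hAA : relRange Edge A α = A := hfix A hAE subset_rfl
  have hloop : IsLoop Edge α A := ⟨hlp, by rw [hAA]⟩
  have hαne : α ≠ [] := hlp.1
  have hαlen : 1 ≤ α.length := List.length_pos_iff.mpr hαne
  rcases hex A hAE hAne α hloop with h | h
  · obtain ⟨β, hβmem, hβnot⟩ := Set.exists_of_ssubset h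
    obtain ⟨hβ1, hβlen, hβrne⟩ := hβmem
    have hβneq : β ≠ α.take β.length := fun he => hβnot ⟨β.length, hβ1, hβlen, he⟩
    have hdiv : ∃ i, i < β.length ∧ β[i]? ≠ α[i]? := by
      by_contra hc
      push_neg at hc
      apply hβneq
      apply List.ext_getElem?
      intro n
      rcases lt_or_ge n β.length with hn | hn
      · rw [hc n hn, List.getElem?_take,
          if_pos hn]
      · rw [List.getElem?_take,
          if_neg (not_lt.mpr hn), List.getElem?_eq_none hn]
    classical
    set t := Nat.find hdiv with ht
    obtain ⟨htlt, htne⟩ := Nat.find_spec hdiv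
    have hagree : ∀ i < t, β[i]? = α[i]? := by
      intro i hi
      have h2 := Nat.find_min hdiv hi
      push_neg at h2
      exact h2 (hi.trans htlt)
    have htake : β.take t = α.take t := by
      apply List.ext_getElem?
      intro n
      rw [List.getElem?_take, List.getElem?_take]
      split
      · rw [hagree n ‹_›]
      · rfl
    obtain ⟨b, hb⟩ : ∃ b, β[t]? = some b := ⟨β[t], List.getElem?_eq_getElem htlt⟩
    have hbα : (some b : Option Λ) ≠ α[t]? := fun he => htne (hb.trans he)
    have htα : t < α.length := htlt.trans_le hβlen
    have htake1 : β.take (t + 1) = α.take t ++ [b] := by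
      rw [List.take_succ, htake, hb]
      rfl
    have hne1 : (relRange Edge (relRange Edge A (α.take t)) [b]).Nonempty := by
      have hsplit : β.take (t + 1) ++ β.drop (t + 1) = β := List.take_append_drop _ _
      have := nonempty_of_relRange_append (Edge := Edge) (S := A)
        (γ := β.take (t + 1)) (δ := β.drop (t + 1)) (by rw [hsplit]; exact hβrne)
      rwa [htake1, relRange_append'] at this
    obtain ⟨w, u, huC, hE⟩ := hne1
    have hbel : b ∈ edgeLabels Edge (relRange Edge A (α.take t)) := ⟨u, huC, w, hE⟩
    rcases Nat.eq_zero_or_pos t with ht0 | ht1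
    · -- exit at position |α| with B = A
      refine ⟨α.length, hαlen, le_refl _, A, hAE, hAne, ?_, ?_⟩
      · rw [List.take_length, hAA]
      · intro hcon
        have hb0 : b ∈ edgeLabels Edge A := by
          rw [ht0] at hbel; exact hbel
        rw [hcon] at hb0
        rw [Nat.mod_self] at hb0
        rw [ht0] at hbα
        exact hbα hb0.symm
    · -- exit at position t
      have hlpt : IsLP Edge (α.take t) := by
        constructor
        · intro hnil
          have := congrArg List.length hnil
          simp [min_eq_left (le_of_lt htα)] at this
          omega
        · have : (relRange Edge Set.univ (α.take t ++ α.drop t)).Nonempty := by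
            rw [List.take_append_drop]; exact hlp.2
          exact nonempty_of_relRange_append this
      have hCE : relRange Edge A (α.take t) ∈ ℰ := hsm.1.2.1 A hAE _ hlpt
      have hCne : (relRange Edge A (α.take t)).Nonempty := by
        have : (relRange Edge A (α.take t ++ α.drop t)).Nonempty := by
          rw [List.take_append_drop, hAA]; exact hAne
        exact nonempty_of_relRange_append this
      refine ⟨t, ht1, le_of_lt htα, relRange Edge A (α.take t), hCE, hCne, subset_rfl, ?_⟩
      intro hcon
      rw [hcon] at hbel
      rw [Nat.mod_eq_of_lt htα] at hbel
      exact hbα hbel.symm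
  · rw [hAA] at h
    exact (h.2 h.1).elim
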